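/- arXiv:0706.1484 — 2 statements merged into one kernel-verified Lean document; each statement's English description precedes it below -/
import Mathlib

section
/- Let W = {W_i}_{i∈I} be a generating sequence of closed subspaces of H. If w is an admissible weight sequence (i.e., (w_i, W_i) is a fusion frame) and a = {a_i} ∈ ℓ^∞_+(I) with inf_i a_i > 0, then a·w = {a_i w_i} is also admissible, and the fusion frames W_w and W_{aw} have equal excess. -/
noncomputable section

open scoped InnerProductSpace ENNReal

variable {H K : Type*} [NormedAddCommGroup H] [InnerProductSpace ℂ H] [CompleteSpace H]
  [NormedAddCommGroup K] [InnerProductSpace ℂ K] [CompleteSpace K]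

/-- Orthogonal projection onto (the closure of) a subspace, as an operator `H →L[ℂ] H`. -/
def sproj (M : Submodule ℂ H) : H →L[ℂ] H :=
  M.topologicalClosure.subtypeL ∘L M.topologicalClosure.orthogonalProjection

/-- The reduced minimum modulus of a bounded operator. -/
def gammaRMM (T : H →L[ℂ] K) : ℝ :=
  sInf ((fun x => ‖T x‖) '' {x : H | x ∈ (LinearMap.ker (T : H →ₗ[ℂ] K))ᗮ ∧ ‖x‖ = 1})

/-- `M ⊖ N`. -/
def ominus (M N : Submodule ℂ H) : Submodule ℂ H := M ⊓ (M ⊓ N)ᗮ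

open Classical in
/-- The cosine of the Friedrichs angle between two subspaces. -/
def angleCos (M N : Submodule ℂ H) : ℝ :=
  if M ≤ N ∨ N ≤ M then 0
  else sSup {r : ℝ | ∃ x ∈ ominus M N, ∃ y ∈ ominus N M,
    ‖x‖ = 1 ∧ ‖y‖ = 1 ∧ r = ‖(inner ℂ x y : ℂ)‖}

/-- The sine of the Friedrichs angle. -/
def angleSin (M N : Submodule ℂ H) : ℝ := Real.sqrt (1 - angleCos M N ^ 2)

variable {I : Type*}

/-- `(w i, W i)` is a fusion frame (frame of subspaces) with bounds `A`, `B`. -/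
def IsFusionFrameWith (w : I → ℝ) (W : I → Submodule ℂ H) (A B : ℝ) : Prop :=
  0 < A ∧ 0 < B ∧ (∀ i, IsClosed (W i : Set H)) ∧
    ∀ f : H, A * ‖f‖ ^ 2 ≤ ∑' i, w i ^ 2 * ‖sproj (W i) f‖ ^ 2 ∧
      ∑' i, w i ^ 2 * ‖sproj (W i) f‖ ^ 2 ≤ B * ‖f‖ ^ 2

/-- `(w i, W i)` is a fusion frame for some bounds. -/
def IsFusionFrame (w : I → ℝ) (W : I → Submodule ℂ H) : Prop :=
  ∃ A B : ℝ, IsFusionFrameWith w W A B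

/-- a family of mutually orthogonal closed subspaces with dense span. -/
def IsOBS (E : I → Submodule ℂ H) : Prop :=
  (∀ i, IsClosed (E i : Set H)) ∧
  (∀ i j, i ≠ j → ∀ x ∈ E i, ∀ y ∈ E j, (inner ℂ x y : ℂ) = 0) ∧
  (⨆ i, E i).topologicalClosure = ⊤

/-- A minimal sequence of subspaces. -/
def IsMinimal (W : I → Submodule ℂ H) : Prop :=
  ∀ i, W i ⊓ (⨆ j ∈ {j : I | j ≠ i}, W j).topologicalClosure = ⊥

/-- The kernel of the synthesis operator of `(w i, W i)`, as a subspace of `⊕₂ W i`. -/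
def synthesisKernel (w : I → ℝ) (W : I → Submodule ℂ H) :
    Submodule ℂ (lp (fun i => W i) 2) where
  carrier := {g | ∀ f : H, HasSum (fun i => (w i : ℂ) * (inner ℂ ((g i : H)) f : ℂ)) 0}
  zero_mem' := by
    intro f
    have : (fun i => (w i : ℂ) * (inner ℂ (((0 : lp (fun i => W i) 2) i : H)) f : ℂ)) =
        fun _ => 0 := by
      funext i; simp [lp.coeFn_zero]
    rw [this]; exact hasSum_zero
  add_mem' := by
    intro a b ha hb f
    have h := (ha f).add (hb f)
    rw [add_zero] at h
    have he : (fun i => (w i : ℂ) * (inner ℂ (((a + b) i : H)) f : ℂ)) =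
        fun i => (w i : ℂ) * (inner ℂ ((a i : H)) f : ℂ) +
          (w i : ℂ) * (inner ℂ ((b i : H)) f : ℂ) := by
      funext i
      have h2 : ((a + b) i : ↥(W i)) = a i + b i := by rw [lp.coeFn_add]; rfl
      rw [h2, Submodule.coe_add, inner_add_left]; ring
    rw [he]; exact h
  smul_mem' := by
    intro c a ha f
    have h := (ha f).mul_left (starRingEnd ℂ c)
    rw [mul_zero] at h
    have he : (fun i => (w i : ℂ) * (inner ℂ (((c • a) i : H)) f : ℂ)) =
        fun i => (starRingEnd ℂ c) * ((w i : ℂ) * (inner ℂ ((a i : H)) f : ℂ)) := by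
      funext i
      have h2 : ((c • a) i : ↥(W i)) = c • a i := by rw [lp.coeFn_smul]; rfl
      rw [h2, Submodule.coe_smul, inner_smul_left]; ring
    rw [he]; exact h

/-- The excess of a fusion frame. -/
def fusionExcess (w : I → ℝ) (W : I → Submodule ℂ H) : Cardinal :=
  Module.rank ℂ (synthesisKernel w W)


lemma memℓp_scale {I : Type*} {W : I → Submodule ℂ H} (a : I → ℝ) {M : ℝ}
    (hM : ∀ i, |a i| ≤ M) (g : lp (fun i => W i) 2) :
    Memℓp (fun i => (a i : ℂ) • g i) 2 := by
  apply memℓp_gen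
  have hg : Summable fun i => ‖g i‖ ^ (2:ℝ≥0∞).toReal :=
    (lp.memℓp g).summable (by norm_num)
  apply Summable.of_nonneg_of_le (fun i => by positivity) _ (hg.mul_left (M ^ (2:ℝ≥0∞).toReal))
  intro i
  have h1 : ‖(a i : ℂ) • g i‖ = |a i| * ‖g i‖ := by
    rw [norm_smul, Complex.norm_real, Real.norm_eq_abs]
  have hM0 : 0 ≤ M := le_trans (abs_nonneg _) (hM i)
  calc ‖(a i : ℂ) • g i‖ ^ (2:ℝ≥0∞).toReal = (|a i| * ‖g i‖) ^ (2:ℝ≥0∞).toReal := by rw [h1]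
    _ ≤ (M * ‖g i‖) ^ (2:ℝ≥0∞).toReal := by
        apply Real.rpow_le_rpow (by positivity) (by gcongr; exact hM i) (by positivity)
    _ = M ^ (2:ℝ≥0∞).toReal * ‖g i‖ ^ (2:ℝ≥0∞).toReal :=
        Real.mul_rpow hM0 (norm_nonneg _)

lemma mem_kernel_scale {I : Type*} (W : I → Submodule ℂ H) (w w' a : I → ℝ)
    (hrel : ∀ i, a i * w' i = w i) {M : ℝ} (hM : ∀ i, |a i| ≤ M)
    (g : lp (fun i => W i) 2) (hg : g ∈ synthesisKernel w W) :
    (⟨fun i => (a i : ℂ) • g i, memℓp_scale a hM g⟩ : lp (fun i => W i) 2) ∈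
      synthesisKernel w' W := by
  intro f
  have key : (fun i => (w' i : ℂ) *
      (inner ℂ (((⟨fun i => (a i : ℂ) • g i, memℓp_scale a hM g⟩ : lp (fun i => W i) 2) i : H)) f : ℂ))
      = fun i => (w i : ℂ) * (inner ℂ ((g i : H)) f : ℂ) := by
    funext i
    have h2 : ((⟨fun i => (a i : ℂ) • g i, memℓp_scale a hM g⟩ : lp (fun i => W i) 2) i : H)
        = (a i : ℂ) • (g i : H) := rfl
    rw [h2, inner_smul_left, Complex.conj_ofReal, ← hrel i]
    push_cast
    ring
  rw [key]
  exact hg f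

set_option maxHeartbeats 1000000 in
lemma excess_scale {I : Type*} (W : I → Submodule ℂ H) (w a : I → ℝ) {c M : ℝ}
    (hc : 0 < c) (h1 : ∀ i, c ≤ a i) (h2 : ∀ i, a i ≤ M) :
    fusionExcess (fun i => a i * w i) W = fusionExcess w W := by
  have hpos : ∀ i, 0 < a i := fun i => lt_of_lt_of_le hc (h1 i)
  have hMabs : ∀ i, |a i| ≤ M := fun i => (abs_of_pos (hpos i)).le.trans ((abs_of_pos (hpos i)) ▸ h2 i)
  have hinv : ∀ i, |(fun j => (a j)⁻¹) i| ≤ c⁻¹ := by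
    intro i
    rw [abs_of_pos (inv_pos.mpr (hpos i))]
    exact inv_anti₀ hc (h1 i)
  have hne : ∀ i, (a i : ℂ) ≠ 0 := fun i => by
    exact_mod_cast Complex.ofReal_ne_zero.mpr (ne_of_gt (hpos i))
  let e : synthesisKernel (fun i => a i * w i) W ≃ₗ[ℂ] synthesisKernel w W :=
    { toFun := fun g => ⟨⟨fun i => (a i : ℂ) • (g : lp (fun i => W i) 2) i,
        memℓp_scale a hMabs _⟩,
        mem_kernel_scale W (fun i => a i * w i) w a (fun _ => rfl) hMabs _ g.2⟩
      invFun := fun g => ⟨⟨fun i => (((a i)⁻¹ : ℝ) : ℂ) • (g : lp (fun i => W i) 2) i,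
        memℓp_scale (fun j => (a j)⁻¹) hinv _⟩,
        mem_kernel_scale W w (fun i => a i * w i) (fun j => (a j)⁻¹)
          (fun i => by rw [← mul_assoc, inv_mul_cancel₀ (ne_of_gt (hpos i)), one_mul]) hinv _ g.2⟩
      map_add' := by
        intro x y
        apply Subtype.ext
        apply Subtype.ext
        funext i
        show (a i : ℂ) • ((↑(x + y) : lp (fun i => W i) 2) i) = _
        have : (↑(x + y) : lp (fun i => W i) 2) = ↑x + ↑y := rfl
        rw [this, lp.coeFn_add]
        show (a i : ℂ) • ((x : lp (fun i => W i) 2) i + (y : lp (fun i => W i) 2) i) = _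
        rw [smul_add]
        rfl
      map_smul' := by
        intro m x
        apply Subtype.ext
        apply Subtype.ext
        funext i
        show (a i : ℂ) • ((↑(m • x) : lp (fun i => W i) 2) i) = _
        have : (↑(m • x) : lp (fun i => W i) 2) = m • ↑x := rfl
        rw [this, lp.coeFn_smul]
        show (a i : ℂ) • (m • (x : lp (fun i => W i) 2) i) = _
        rw [smul_comm]
        rfl
      left_inv := by
        intro g
        apply Subtype.ext
        apply Subtype.ext
        funext i
        show (((a i)⁻¹ : ℝ) : ℂ) • ((a i : ℂ) • (g : lp (fun i => W i) 2) i) = _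
        rw [smul_smul]
        push_cast
        rw [inv_mul_cancel₀ (hne i), one_smul]
      right_inv := by
        intro g
        apply Subtype.ext
        apply Subtype.ext
        funext i
        show (a i : ℂ) • ((((a i)⁻¹ : ℝ) : ℂ) • (g : lp (fun i => W i) 2) i) = _
        rw [smul_smul]
        push_cast
        rw [mul_inv_cancel₀ (hne i), one_smul] }
  exact e.rank_eq

theorem admissible_weight_mul {I : Type*} (W : I → Submodule ℂ H)
    (hgen : (⨆ i, W i).topologicalClosure = ⊤)
    (w : I → ℝ) (hw : ∀ i, 0 < w i) (hwb : BddAbove (Set.range w))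
    (hFS : IsFusionFrame w W)
    (a : I → ℝ) (ha : ∀ i, 0 < a i) (hab : BddAbove (Set.range a))
    (hainf : ∃ c > 0, ∀ i, c ≤ a i) :
    IsFusionFrame (fun i => a i * w i) W ∧
    fusionExcess (fun i => a i * w i) W = fusionExcess w W := by
  obtain ⟨A, B, hA, hB, hcl, hfr⟩ := hFS
  obtain ⟨c, hc, hca⟩ := hainf
  obtain ⟨M0, hM0⟩ := hab
  set M : ℝ := max M0 1 with hMdef
  have hM : ∀ i, a i ≤ M := fun i =>
    le_trans (hM0 (Set.mem_range_self i)) (le_max_left _ _)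
  have hM1 : (0:ℝ) < M := lt_of_lt_of_le one_pos (le_max_right _ _)
  constructor
  · refine ⟨c ^ 2 * A, M ^ 2 * B, by positivity, by positivity, hcl, ?_⟩
    intro f
    by_cases hs : Summable (fun i => w i ^ 2 * ‖sproj (W i) f‖ ^ 2)
    · have hle : ∀ i, (a i * w i) ^ 2 * ‖sproj (W i) f‖ ^ 2 ≤
          M ^ 2 * (w i ^ 2 * ‖sproj (W i) f‖ ^ 2) := by
        intro i
        have h1 : (a i * w i) ^ 2 ≤ M ^ 2 * w i ^ 2 := by
          rw [mul_pow]
          have : a i ^ 2 ≤ M ^ 2 := pow_le_pow_left₀ (ha i).le (hM i) 2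
          nlinarith [sq_nonneg (w i)]
        nlinarith [sq_nonneg ‖sproj (W i) f‖]
      have hge : ∀ i, c ^ 2 * (w i ^ 2 * ‖sproj (W i) f‖ ^ 2) ≤
          (a i * w i) ^ 2 * ‖sproj (W i) f‖ ^ 2 := by
        intro i
        have h1 : c ^ 2 * w i ^ 2 ≤ (a i * w i) ^ 2 := by
          rw [mul_pow]
          have : c ^ 2 ≤ a i ^ 2 := pow_le_pow_left₀ hc.le (hca i) 2
          nlinarith [sq_nonneg (w i)]
        nlinarith [sq_nonneg ‖sproj (W i) f‖]
      have hs2 : Summable (fun i => (a i * w i) ^ 2 * ‖sproj (W i) f‖ ^ 2) :=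
        Summable.of_nonneg_of_le (fun i => by positivity) hle (hs.mul_left (M ^ 2))
      constructor
      · calc c ^ 2 * A * ‖f‖ ^ 2 = c ^ 2 * (A * ‖f‖ ^ 2) := by ring
          _ ≤ c ^ 2 * ∑' i, w i ^ 2 * ‖sproj (W i) f‖ ^ 2 := by
              have := (hfr f).1
              nlinarith [sq_nonneg c]
          _ = ∑' i, c ^ 2 * (w i ^ 2 * ‖sproj (W i) f‖ ^ 2) := (hs.tsum_mul_left (c ^ 2)).symm
          _ ≤ ∑' i, (a i * w i) ^ 2 * ‖sproj (W i) f‖ ^ 2 :=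
              Summable.tsum_le_tsum hge (hs.mul_left (c ^ 2)) hs2
      · calc ∑' i, (a i * w i) ^ 2 * ‖sproj (W i) f‖ ^ 2
            ≤ ∑' i, M ^ 2 * (w i ^ 2 * ‖sproj (W i) f‖ ^ 2) :=
              Summable.tsum_le_tsum hle hs2 (hs.mul_left (M ^ 2))
          _ = M ^ 2 * ∑' i, w i ^ 2 * ‖sproj (W i) f‖ ^ 2 := hs.tsum_mul_left (M ^ 2)
          _ ≤ M ^ 2 * (B * ‖f‖ ^ 2) := by
              have := (hfr f).2
              nlinarith [sq_nonneg M]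
          _ = M ^ 2 * B * ‖f‖ ^ 2 := by ring
    · have h0 : (∑' i, w i ^ 2 * ‖sproj (W i) f‖ ^ 2) = 0 := tsum_eq_zero_of_not_summable hs
      have hf0 : f = 0 := by
        have := (hfr f).1
        rw [h0] at this
        have : ‖f‖ ^ 2 ≤ 0 := by nlinarith
        have : ‖f‖ = 0 := by nlinarith [sq_nonneg ‖f‖, norm_nonneg f]
        exact norm_eq_zero.mp this
      subst hf0
      have hz : (fun i => (a i * w i) ^ 2 * ‖sproj (W i) (0:H)‖ ^ 2) = fun _ => 0 := by
        funext i; simp [map_zero]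
      rw [hz]
      simp
  · exact excess_scale W w a hc hca hM

end
end

section
/- If W = {W_i}_{i∈I} is a Riesz basis of subspaces for H with frame operator S_{W_w} (for weights w bounded away from 0 and ∞), then the subspaces {S_{W_w}^{-1/2} W_i}_{i∈I} form an orthonormal basis of subspaces of H. -/
noncomputable section

open scoped InnerProductSpace ENNReal

variable {H K : Type*} [NormedAddCommGroup H] [InnerProductSpace ℂ H] [CompleteSpace H]
  [NormedAddCommGroup K] [InnerProductSpace ℂ K] [CompleteSpace K]

variable {I : Type*}

section AuxOBS

variable {H₀ : Type*} [NormedAddCommGroup H₀] [InnerProductSpace ℂ H₀] [CompleteSpace H₀]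

lemma aux_hasSum_mem_closure {ι : Type*} {f : ι → H₀} {a : H₀} {s : Submodule ℂ H₀}
    (hf : HasSum f a) (h : ∀ i, f i ∈ s) : a ∈ s.topologicalClosure := by
  have hmem : ∀ t : Finset ι, ∑ i ∈ t, f i ∈ (s : Set H₀) := fun t =>
    Submodule.sum_mem _ fun i _ => h i
  exact mem_closure_of_tendsto hf (Filter.Eventually.of_forall hmem)

lemma aux_unique {ι : Type*} {W : ι → Submodule ℂ H₀}
    (hmin : IsMinimal W) {h : ι → H₀} (hm : ∀ k, h k ∈ W k) (hs : HasSum h 0) (j : ι) :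
    h j = 0 := by
  classical
  have h1 : HasSum (Function.update h j 0) (0 - h j + 0) := hs.update j 0
  have h2 : -(h j) ∈ (⨆ k ∈ {k : ι | k ≠ j}, W k).topologicalClosure := by
    refine aux_hasSum_mem_closure (by simpa using h1) ?_
    intro k
    rcases eq_or_ne k j with rfl | hk
    · simp
    · rw [Function.update_of_ne hk]
      exact Submodule.mem_iSup_of_mem k (Submodule.mem_iSup_of_mem hk (hm k))
  have h3 : h j ∈ (⨆ k ∈ {k : ι | k ≠ j}, W k).topologicalClosure := by
    simpa using neg_mem h2
  have h4 : h j ∈ (⊥ : Submodule ℂ H₀) := by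
    rw [← hmin j]; exact Submodule.mem_inf.mpr ⟨hm j, h3⟩
  simpa using h4

lemma aux_sproj_mem (M : Submodule ℂ H₀) (u : H₀) : sproj M u ∈ M.topologicalClosure :=
  (M.topologicalClosure.orthogonalProjection u).2

lemma aux_inner_sproj (M : Submodule ℂ H₀) (u y : H₀) (hy : y ∈ M) :
    (inner ℂ u y : ℂ) = inner ℂ (sproj M u) y := by
  have hmem : u - sproj M u ∈ (M.topologicalClosure)ᗮ :=
    M.topologicalClosure.sub_starProjection_mem_orthogonal u
  have h0 : (inner ℂ (u - sproj M u) y : ℂ) = 0 :=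
    (Submodule.mem_orthogonal' _ _).mp hmem y (Submodule.le_topologicalClosure M hy)
  rw [inner_sub_left, sub_eq_zero] at h0
  exact h0

end AuxOBS

theorem OBS_of_RBS_inv_sqrt_frameOp {I : Type*} (W : I → Submodule ℂ H)
    (w : I → ℝ) (hw : ∀ i, 0 < w i) (hwb : BddAbove (Set.range w))
    (hwinf : ∃ c > 0, ∀ i, c ≤ w i)
    (hFS : IsFusionFrame w W) (hmin : IsMinimal W)
    (R : H →L[ℂ] H) (hRsa : IsSelfAdjoint R)
    (hRpos : ∀ f : H, 0 ≤ (inner ℂ (R f) f : ℂ).re)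
    (hR : ∀ f : H, HasSum (fun i => (w i ^ 2 : ℝ) • sproj (W i) (R (R f))) f) :
    IsOBS (fun i => (W i).map (R : H →ₗ[ℂ] H)) := by
  classical
  obtain ⟨A, B, hA, hB, hclosed, hframe⟩ := hFS
  have hadj : ContinuousLinearMap.adjoint R = R :=
    ContinuousLinearMap.isSelfAdjoint_iff'.mp hRsa
  have hRinner : ∀ x y : H, (inner ℂ (R x) y : ℂ) = inner ℂ x (R y) := by
    intro x y
    conv_lhs => rw [← hadj]
    rw [ContinuousLinearMap.adjoint_inner_left]
  -- membership of sproj in closed subspaces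
  have hPmem : ∀ i (u : H), sproj (W i) u ∈ W i := by
    intro i u
    have := aux_sproj_mem (W i) u
    rwa [IsClosed.submodule_topologicalClosure_eq (hclosed i)] at this
  -- key structural fact
  have key : ∀ i, ∀ x ∈ W i, ((w i ^ 2 : ℝ) • sproj (W i) (R (R x)) = x ∧
      ∀ j, j ≠ i → sproj (W j) (R (R x)) = 0) := by
    intro i x hx
    set u := R (R x) with hu
    set h : I → H := fun k => (w k ^ 2 : ℝ) • sproj (W k) u - (if k = i then x else 0) with hh
    have hsum : HasSum h 0 := by
      have := (hR x).sub (hasSum_ite_eq i x)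
      simpa [hh] using this
    have hmem : ∀ k, h k ∈ W k := by
      intro k
      refine Submodule.sub_mem _ (Submodule.smul_of_tower_mem _ _ (hPmem k u)) ?_
      rcases eq_or_ne k i with rfl | hk
      · simpa using hx
      · simp [hk]
    have hz := fun j => aux_unique hmin hmem hsum j
    constructor
    · have := hz i
      simpa [hh] using sub_eq_zero.mp (by simpa [hh] using hz i)
    · intro j hj
      have h' := hz j
      simp only [hh] at h'
      rw [if_neg hj, sub_zero] at h'
      have hw2 : (w j ^ 2 : ℝ) ≠ 0 := pow_ne_zero 2 (hw j).ne'
      rcases smul_eq_zero.mp h' with h'' | h''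
      · exact absurd h'' hw2
      · exact h''
  -- norm identity on W i
  have hnorm : ∀ i, ∀ x ∈ W i, ‖x‖ = w i * ‖R x‖ := by
    intro i x hx
    obtain ⟨hx1, _⟩ := key i x hx
    have hinner : (inner ℂ (R x) (R x) : ℂ) = inner ℂ (R (R x)) x := by
      rw [hRinner (R x) x]
    set u := R (R x) with hu
    have h2 : (inner ℂ u x : ℂ) = inner ℂ (sproj (W i) u) x := aux_inner_sproj _ _ _ hx
    have hPu : sproj (W i) u = (w i ^ 2 : ℝ)⁻¹ • x := by
      have hw2 : (w i ^ 2 : ℝ) ≠ 0 := pow_ne_zero 2 (hw i).ne'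
      rw [← hx1, smul_smul, inv_mul_cancel₀ hw2, one_smul]
    have h3 : (inner ℂ u x : ℂ) = ((w i ^ 2 : ℝ)⁻¹ : ℝ) • (inner ℂ x x : ℂ) := by
      rw [h2, hPu, RCLike.real_smul_eq_coe_smul (K := ℂ), inner_smul_real_left]
    have h4 : ‖R x‖ ^ 2 = (w i ^ 2 : ℝ)⁻¹ * ‖x‖ ^ 2 := by
      have hc := hinner.trans h3
      rw [inner_self_eq_norm_sq_to_K, inner_self_eq_norm_sq_to_K, Complex.real_smul] at hc
      exact Complex.ofReal_inj.mp (by push_cast at hc ⊢; exact hc)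
    have h5 : ‖x‖ ^ 2 = (w i * ‖R x‖) ^ 2 := by
      have hw2 : (w i ^ 2 : ℝ) ≠ 0 := pow_ne_zero 2 (hw i).ne'
      field_simp at h4 ⊢
      rw [h4, div_mul_cancel₀ _ hw2]
    have h6 : ‖x‖ = |w i * ‖R x‖| := by
      rw [← Real.sqrt_sq (norm_nonneg x), h5, Real.sqrt_sq_eq_abs]
    rw [h6, abs_of_nonneg (mul_nonneg (hw i).le (norm_nonneg _))]
  refine ⟨?_, ?_, ?_⟩
  -- closedness
  · intro i
    haveI : CompleteSpace (W i) := (hclosed i).completeSpace_coe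
    set T : (W i) →L[ℂ] H := R.comp (W i).subtypeL with hT
    have hbound : ∀ x : (W i), ‖x‖ ≤ ((w i).toNNReal : ℝ) * ‖T x‖ := by
      intro x
      rw [Real.coe_toNNReal _ (hw i).le]
      have := hnorm i x x.2
      simp only [hT, ContinuousLinearMap.comp_apply, Submodule.subtypeL_apply]
      rw [← Submodule.norm_coe x] at *
      exact le_of_eq this
    have hanti := T.antilipschitz_of_bound hbound
    have hcl : IsClosed (Set.range T) := hanti.isClosed_range T.uniformContinuous
    have heq : ((W i).map (R : H →ₗ[ℂ] H) : Set H) = Set.range T := by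
      ext y
      constructor
      · rintro ⟨x, hx, rfl⟩
        exact ⟨⟨x, hx⟩, rfl⟩
      · rintro ⟨x, rfl⟩
        exact ⟨x, x.2, rfl⟩
    rw [heq]
    exact hcl
  -- orthogonality
  · intro i j hij x hx y hy
    obtain ⟨a, ha, rfl⟩ := hx
    obtain ⟨b, hb, rfl⟩ := hy
    have h1 : (inner ℂ (R a) (R b) : ℂ) = inner ℂ (R (R a)) b := (hRinner (R a) b).symm
    have h2 : (inner ℂ (R (R a)) b : ℂ) = inner ℂ (sproj (W j) (R (R a))) b :=
      aux_inner_sproj _ _ _ hb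
    have h3 : sproj (W j) (R (R a)) = 0 := (key i a ha).2 j (Ne.symm hij)
    change (inner ℂ (R a) (R b) : ℂ) = 0
    rw [h1, h2, h3, inner_zero_left]
  -- density
  · rw [Submodule.topologicalClosure_eq_top_iff]
    rw [Submodule.eq_bot_iff]
    intro f hf
    have hWdense : (⨆ i, W i).topologicalClosure = ⊤ := by
      rw [Submodule.eq_top_iff']
      intro g
      refine aux_hasSum_mem_closure (hR g) ?_
      intro i
      exact Submodule.mem_iSup_of_mem i (Submodule.smul_of_tower_mem _ _ (hPmem i _))
    have hWorth : (⨆ i, W i)ᗮ = ⊥ := Submodule.topologicalClosure_eq_top_iff.mp hWdense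
    have hRf : R f = 0 := by
      have hmem : R f ∈ (⨆ i, W i)ᗮ := by
        rw [← Submodule.iInf_orthogonal]
        refine Submodule.mem_iInf _ |>.mpr fun i => ?_
        rw [Submodule.mem_orthogonal]
        intro a ha
        have h1 : (inner ℂ a (R f) : ℂ) = inner ℂ (R a) f := (hRinner a f).symm
        rw [h1]
        exact hf (R a) (Submodule.mem_iSup_of_mem i ⟨a, ha, rfl⟩)
      rw [hWorth] at hmem
      simpa using hmem
    have hzero : HasSum (fun i : I => (0 : H)) f := by
      have := hR f
      simpa [hRf] using this
    have := hzero.unique hasSum_zero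
    exact this

end
end
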